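/- Let T and S be unbounded operators on a Hilbert space H with common dense domain V such that T V ⊆ V, the ranges Im(T) and Im(S) are orthogonal, ⟨Tα, β⟩ = ⟨α, Sβ⟩ for all α, β ∈ V, and T + S is essentially self-adjoint. Then the closure of T + S equals the restriction of T_min + S_min to Dom(T_min) ∩ Dom(S_min), and also equals the restriction of T_max + S_max to Dom(T_max) ∩ Dom(S_max). -/

import Mathlib

/-!
STATEMENT 2: `T, S` unbounded operators with common dense domain `V`, `T V ⊆ V`,
orthogonal ranges, `⟪Tα, β⟫ = ⟪α, Sβ⟫`, and `T + S` essentially self-adjoint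
(its minimal closure equals its maximal closure, i.e. the adjoint of the symmetric
operator `T + S`).  Then the closure of `T + S` equals `T_min + S_min` (restricted to
the intersection of the domains — this is how the sum of `LinearPMap`s is defined)
and also equals `T_max + S_max`, where `T_max = Sp†` and `S_max = Tp†` are the maximal
extensions defined via the formal adjoint relation.
-/

open scoped RealInnerProductSpace
open LinearPMap
set_option linter.unusedSectionVars false

section Aux

variable {H : Type*} [NormedAddCommGroup H] [InnerProductSpace ℝ H] [CompleteSpace H]

/-- The adjoint of a densely defined operator is closed. -/
lemma aux_adjoint_isClosed (T : H →ₗ.[ℝ] H) (hd : Dense (T.domain : Set H)) :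
    T†.IsClosed := by
  have hgraph : (T†.graph : Set (H × H)) =
      ⋂ x : T.domain, {p : H × H | ⟪p.2, (x : H)⟫ = ⟪p.1, T x⟫} := by
    ext p
    simp only [Set.mem_iInter, Set.mem_setOf_eq, SetLike.mem_coe, mem_graph_iff]
    constructor
    · rintro ⟨y, hy1, hy2⟩ x
      rw [← hy1, ← hy2]
      exact adjoint_isFormalAdjoint hd y x
    · intro h
      have hp1 : p.1 ∈ T†.domain :=
        mem_adjoint_domain_of_exists _ ⟨p.2, fun x => h x⟩
      exact ⟨⟨p.1, hp1⟩, rfl, adjoint_apply_eq hd _ fun x => h x⟩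
  rw [LinearPMap.IsClosed, hgraph]
  exact isClosed_iInter fun x => isClosed_eq
    (Continuous.inner continuous_snd continuous_const)
    (Continuous.inner continuous_fst continuous_const)

/-- The closure of a closed operator is itself. -/
lemma aux_closure_of_closed {f : H →ₗ.[ℝ] H} (hf : f.IsClosed) : f.closure = f := by
  apply eq_of_eq_graph
  rw [← hf.isClosable.graph_closure_eq_closure_graph]
  exact IsClosed.submodule_topologicalClosure_eq hf

/-- Addition of `LinearPMap`s is monotone. -/
lemma aux_add_le_add {f f' g g' : H →ₗ.[ℝ] H} (h1 : f ≤ f') (h2 : g ≤ g') :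
    f + g ≤ f' + g' := by
  refine ⟨inf_le_inf h1.1 h2.1, ?_⟩
  intro x y hxy
  rw [LinearPMap.add_apply, LinearPMap.add_apply]
  rw [h1.2 (show ((⟨(x : H), x.2.1⟩ : f.domain) : H) = ((⟨(y : H), y.2.1⟩ : f'.domain) : H)
        from hxy),
      h2.2 (show ((⟨(x : H), x.2.2⟩ : g.domain) : H) = ((⟨(y : H), y.2.2⟩ : g'.domain) : H)
        from hxy)]

/-- Evaluate a `LinearPMap` from graph membership. -/
lemma aux_apply_of_mem_graph {f : H →ₗ.[ℝ] H} {x y : H} (h : (x, y) ∈ f.graph)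
    (hx : x ∈ f.domain) : f ⟨x, hx⟩ = y := by
  obtain ⟨z, hz1, hz2⟩ := (mem_graph_iff f).mp h
  have hzx : (⟨x, hx⟩ : f.domain) = z := Subtype.ext hz1.symm
  rw [hzx]
  exact hz2

end Aux

theorem closure_of_sum_eq_min_sum_eq_max_sum
    {H : Type*} [NormedAddCommGroup H] [InnerProductSpace ℝ H] [CompleteSpace H]
    (V : Submodule ℝ H) (hdense : Dense (V : Set H))
    (T S : V →ₗ[ℝ] H)
    (hTV : ∀ v : V, T v ∈ V)
    (hadj : ∀ α β : V, ⟪T α, (β : H)⟫ = ⟪(α : H), S β⟫)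
    (horth : ∀ α β : V, ⟪T α, S β⟫ = 0)
    (Tp Sp : H →ₗ.[ℝ] H) (hTp : Tp = ⟨V, T⟩) (hSp : Sp = ⟨V, S⟩)
    (hesa : (Tp + Sp).closure = (Tp + Sp)†) :
    (Tp + Sp).closure = Tp.closure + Sp.closure
      ∧ (Tp + Sp).closure = Sp† + Tp† := by
  subst hTp hSp
  set Tp : H →ₗ.[ℝ] H := ⟨V, T⟩ with hTp
  set Sp : H →ₗ.[ℝ] H := ⟨V, S⟩ with hSp
  set A : H →ₗ.[ℝ] H := Tp + Sp with hA
  have hdT : Dense (Tp.domain : Set H) := hdense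
  have hdS : Dense (Sp.domain : Set H) := hdense
  have hdA : Dense (A.domain : Set H) := by
    have : A.domain = V := inf_idem V
    rw [this]; exact hdense
  -- the flipped formal adjoint identity
  have hadj' : ∀ α β : V, ⟪S α, (β : H)⟫ = ⟪(α : H), T β⟫ := by
    intro α β
    rw [real_inner_comm, ← hadj β α, real_inner_comm]
  have hTS : Tp.IsFormalAdjoint Sp := fun x y => hadj x y
  have hST : Sp.IsFormalAdjoint Tp := fun x y => hadj' x y
  have hTleSmax : Tp ≤ Sp† := hST.le_adjoint hdS
  have hSleTmax : Sp ≤ Tp† := hTS.le_adjoint hdT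
  have hSmaxClosed : Sp†.IsClosed := aux_adjoint_isClosed Sp hdS
  have hTmaxClosed : Tp†.IsClosed := aux_adjoint_isClosed Tp hdT
  have hTclosable : Tp.IsClosable := hSmaxClosed.isClosable.leIsClosable hTleSmax
  have hSclosable : Sp.IsClosable := hTmaxClosed.isClosable.leIsClosable hSleTmax
  have hTminle : Tp.closure ≤ Sp† := by
    have := hSmaxClosed.isClosable.closure_mono hTleSmax
    rwa [aux_closure_of_closed hSmaxClosed] at this
  have hSminle : Sp.closure ≤ Tp† := by
    have := hTmaxClosed.isClosable.closure_mono hSleTmax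
    rwa [aux_closure_of_closed hTmaxClosed] at this
  -- A is symmetric, hence closable
  have hAsym : A.IsFormalAdjoint A := by
    rintro ⟨x, hx⟩ ⟨y, hy⟩
    show ⟪T ⟨x, hx.1⟩ + S ⟨x, hx.2⟩, y⟫ = ⟪x, T ⟨y, hy.1⟩ + S ⟨y, hy.2⟩⟫
    rw [inner_add_left, inner_add_right, hadj ⟨x, hx.1⟩ ⟨y, hy.2⟩,
      hadj' ⟨x, hx.2⟩ ⟨y, hy.1⟩]
    exact add_comm _ _
  have hAleAdj : A ≤ A† := hAsym.le_adjoint hdA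
  have hAadjClosed : A†.IsClosed := aux_adjoint_isClosed A hdA
  have hAclosable : A.IsClosable := hAadjClosed.isClosable.leIsClosable hAleAdj
  -- Pythagoras
  have hpyth : ∀ v : V, ‖T v‖ ≤ ‖T v + S v‖ := by
    intro v
    have h2 : ‖T v + S v‖ ^ 2 = ‖T v‖ ^ 2 + ‖S v‖ ^ 2 := by
      rw [norm_add_sq_real, horth v v]; ring
    apply le_of_pow_le_pow_left₀ two_ne_zero (norm_nonneg _)
    rw [h2]
    nlinarith [sq_nonneg ‖S v‖]
  -- the key inclusion : A.closure ≤ T_min + S_min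
  have hkey : A.closure ≤ Tp.closure + Sp.closure := by
    apply le_of_le_graph
    intro p hp
    rw [← hAclosable.graph_closure_eq_closure_graph] at hp
    have hp' : p ∈ closure (A.graph : Set (H × H)) := hp
    obtain ⟨u, humem, hulim⟩ := mem_closure_iff_seq_limit.mp hp'
    choose α hα1 hα2 using fun n => (mem_graph_iff A).mp (humem n)
    set a : ℕ → V := fun n => ⟨((α n : H)), (α n).2.1⟩ with ha
    have hAα : ∀ n, (u n).2 = T (a n) + S (a n) := fun n => (hα2 n).symm
    have ha1 : Filter.Tendsto (fun n => ((a n : H))) Filter.atTop (nhds p.1) := by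
      have h1 : Filter.Tendsto (fun n => (u n).1) Filter.atTop (nhds p.1) :=
        (continuous_fst.tendsto p).comp hulim
      have : (fun n => ((a n : H))) = fun n => (u n).1 := funext fun n => hα1 n
      rw [this]; exact h1
    have hTSlim : Filter.Tendsto (fun n => T (a n) + S (a n)) Filter.atTop (nhds p.2) := by
      have h2 : Filter.Tendsto (fun n => (u n).2) Filter.atTop (nhds p.2) :=
        (continuous_snd.tendsto p).comp hulim
      have : (fun n => T (a n) + S (a n)) = fun n => (u n).2 :=
        funext fun n => (hAα n).symm
      rw [this]; exact h2
    have hcau : CauchySeq (fun n => T (a n)) := by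
      have hc : CauchySeq (fun n => T (a n) + S (a n)) := hTSlim.cauchySeq
      rw [Metric.cauchySeq_iff] at hc ⊢
      intro ε hε
      obtain ⟨N, hN⟩ := hc ε hε
      refine ⟨N, fun m hm n hn => ?_⟩
      have h3 := hN m hm n hn
      rw [dist_eq_norm] at h3 ⊢
      calc ‖T (a m) - T (a n)‖ = ‖T (a m - a n)‖ := by rw [_root_.map_sub]
        _ ≤ ‖T (a m - a n) + S (a m - a n)‖ := hpyth _
        _ = ‖(T (a m) + S (a m)) - (T (a n) + S (a n))‖ := by
              rw [_root_.map_sub, _root_.map_sub]; congr 1; abel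
        _ < ε := h3
    obtain ⟨w, hw⟩ := cauchySeq_tendsto_of_complete hcau
    have hSw : Filter.Tendsto (fun n => S (a n)) Filter.atTop (nhds (p.2 - w)) := by
      have := hTSlim.sub hw
      simpa using this
    have hTg : (p.1, w) ∈ Tp.closure.graph := by
      rw [← hTclosable.graph_closure_eq_closure_graph]
      refine mem_closure_of_tendsto (f := fun n => (((a n : H)), T (a n)))
        (ha1.prodMk_nhds hw) (Filter.Eventually.of_forall fun n => ?_)
      exact Tp.mem_graph (a n)
    have hSg : (p.1, p.2 - w) ∈ Sp.closure.graph := by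
      rw [← hSclosable.graph_closure_eq_closure_graph]
      refine mem_closure_of_tendsto (f := fun n => (((a n : H)), S (a n)))
        (ha1.prodMk_nhds hSw) (Filter.Eventually.of_forall fun n => ?_)
      exact Sp.mem_graph (a n)
    have hx1 : p.1 ∈ Tp.closure.domain := mem_domain_of_mem_graph hTg
    have hx2 : p.1 ∈ Sp.closure.domain := mem_domain_of_mem_graph hSg
    refine (mem_graph_iff _).mpr ⟨⟨p.1, hx1, hx2⟩, rfl, ?_⟩
    rw [LinearPMap.add_apply, aux_apply_of_mem_graph hTg hx1, aux_apply_of_mem_graph hSg hx2]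
    abel
  -- S† + T† ≤ A†
  have hcomp : ∀ (x : H) (hx1 : x ∈ Sp†.domain) (hx2 : x ∈ Tp†.domain) (β : A.domain),
      ⟪Sp† ⟨x, hx1⟩ + Tp† ⟨x, hx2⟩, (β : H)⟫ = ⟪x, A β⟫ := by
    intro x hx1 hx2 β
    have h1 := adjoint_isFormalAdjoint hdS ⟨x, hx1⟩ ⟨(β : H), β.2.2⟩
    have h2 := adjoint_isFormalAdjoint hdT ⟨x, hx2⟩ ⟨(β : H), β.2.1⟩
    show ⟪Sp† ⟨x, hx1⟩ + Tp† ⟨x, hx2⟩, (β : H)⟫ = ⟪x, T ⟨(β : H), β.2.1⟩ + S ⟨(β : H), β.2.2⟩⟫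
    rw [inner_add_left, inner_add_right, h1, h2]
    exact add_comm _ _
  have hmaxle : Sp† + Tp† ≤ A† := by
    refine ⟨?_, ?_⟩
    · intro x hx
      exact mem_adjoint_domain_of_exists _
        ⟨Sp† ⟨x, hx.1⟩ + Tp† ⟨x, hx.2⟩, fun β => hcomp x hx.1 hx.2 β⟩
    · intro x y hxy
      have h := adjoint_apply_eq hdA y
        (x₀ := Sp† ⟨(x : H), x.2.1⟩ + Tp† ⟨(x : H), x.2.2⟩)
        (fun β => by rw [← hxy]; exact hcomp (x : H) x.2.1 x.2.2 β)
      rw [LinearPMap.add_apply, h]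
  have hminle : Tp.closure + Sp.closure ≤ Sp† + Tp† := aux_add_le_add hTminle hSminle
  have hchain : Tp.closure + Sp.closure ≤ A.closure :=
    le_trans hminle (le_trans hmaxle (le_of_eq hesa.symm))
  exact ⟨le_antisymm hkey hchain,
    le_antisymm (le_trans hkey hminle) (le_trans hmaxle (le_of_eq hesa.symm))⟩
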